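/- (Brualdi–Newman) For every n > 4, there is no symmetric circulant real Hadamard matrix of order n; that is, no circulant matrix H ∈ M_n(ℝ) with Hᵗ = H, all entries ±1, and H Hᵗ = n·I. -/

import Mathlib

open Matrix

/-- Sum of a `ZMod 2`-valued function invariant under an involution equals the sum
over the fixed points of the involution. -/
lemma sum_eq_sum_fixed_zmod2 {α : Type*} [Fintype α] [DecidableEq α]
    (σ : α → α) (hσ : ∀ a, σ (σ a) = a) (f : α → ZMod 2) (hf : ∀ a, f (σ a) = f a) :
    ∑ a, f a = ∑ a ∈ Finset.univ.filter (fun a => σ a = a), f a := by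
  rw [← Finset.sum_filter_add_sum_filter_not Finset.univ (fun a => σ a = a) f]
  have hzero : ∑ a ∈ Finset.univ.filter (fun a => ¬ σ a = a), f a = 0 := by
    apply Finset.sum_involution (fun a _ => σ a)
    · intro a _
      rw [hf a, CharTwo.add_self_eq_zero]
    · intro a ha _
      simpa using (Finset.mem_filter.mp ha).2
    · intro a ha
      simp only [Finset.mem_filter, Finset.mem_univ, true_and] at ha ⊢
      intro h
      exact ha (((hσ a).symm.trans h).symm)
    · intro a _
      exact hσ a
  rw [hzero, add_zero]

/-- Brualdi–Newman: for `n > 4` there is no symmetric circulant real Hadamard matrix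
of order `n`. -/
theorem no_symmetric_circulant_hadamard
    (n : ℕ) [NeZero n] (hn : 4 < n) :
    ¬ ∃ H : Matrix (ZMod n) (ZMod n) ℝ,
        (∃ ξ : ZMod n → ℝ, ∀ i j, H i j = ξ (j - i)) ∧
        Hᵀ = H ∧
        (∀ i j, H i j = 1 ∨ H i j = -1) ∧
        H * Hᵀ = (n : ℝ) • 1 := by
  rintro ⟨H, ⟨ξ, hξ⟩, hsym, hpm, hH⟩
  haveI : Fact (1 < n) := ⟨by omega⟩
  -- basic facts about ξ
  have hpm' : ∀ j : ZMod n, ξ j = 1 ∨ ξ j = -1 := by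
    intro j
    have := hpm 0 j
    rwa [hξ 0 j, sub_zero] at this
  have heven : ∀ j : ZMod n, ξ (-j) = ξ j := by
    intro j
    have := congrFun (congrFun hsym j) 0
    rw [transpose_apply, hξ 0 j, hξ j 0, sub_zero, zero_sub] at this
    exact this.symm
  -- orthogonality relations
  have horth : ∀ k : ZMod n, k ≠ 0 → ∑ j : ZMod n, ξ j * ξ (j + k) = 0 := by
    intro k hk
    have := congrFun (congrFun hH 0) (-k)
    rw [mul_apply, Matrix.smul_apply, one_apply] at this
    have h0k : (0 : ZMod n) ≠ -k := by
      intro h; exact hk (by rw [← neg_neg k, ← h, neg_zero])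
    rw [if_neg h0k, smul_zero] at this
    rw [← this]
    apply Finset.sum_congr rfl
    intro j _
    rw [transpose_apply, hξ 0 j, hξ (-k) j, sub_zero, sub_neg_eq_add]
  -- the integer indicator of -1 entries
  set χ : ZMod n → ℤ := fun j => if ξ j = 1 then 0 else 1 with hχdef
  have hχ01 : ∀ j, χ j = 0 ∨ χ j = 1 := by
    intro j; by_cases h : ξ j = 1 <;> simp [hχdef, h]
  have hs : ∀ j, ((1 - 2 * χ j : ℤ) : ℝ) = ξ j := by
    intro j
    rcases hpm' j with h | h <;> simp [hχdef, h] <;> norm_num [h]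
  have hχeven : ∀ j, χ (-j) = χ j := by
    intro j; simp only [hχdef, heven j]
  -- integer orthogonality
  have horthZ : ∀ k : ZMod n, k ≠ 0 →
      ∑ j : ZMod n, (1 - 2 * χ j) * (1 - 2 * χ (j + k)) = (0 : ℤ) := by
    intro k hk
    have : ((∑ j : ZMod n, (1 - 2 * χ j) * (1 - 2 * χ (j + k)) : ℤ) : ℝ) = 0 := by
      push_cast
      rw [← horth k hk]
      apply Finset.sum_congr rfl
      intro j _
      rw [← hs j, ← hs (j + k)]
      push_cast
      ring
    exact_mod_cast this
  set T : ℤ := ∑ j : ZMod n, χ j with hT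
  set r : ZMod n → ℤ := fun k => ∑ j : ZMod n, χ j * χ (j + k) with hr
  have hshift : ∀ k : ZMod n, ∑ j : ZMod n, χ (j + k) = T := by
    intro k
    rw [hT]
    exact Fintype.sum_equiv (Equiv.addRight k) (fun j => χ (j + k)) χ (fun j => rfl)
  have key : ∀ k : ZMod n, k ≠ 0 → (n : ℤ) - 4 * T + 4 * r k = 0 := by
    intro k hk
    have h1 := horthZ k hk
    have expand : ∑ j : ZMod n, (1 - 2 * χ j) * (1 - 2 * χ (j + k)) =
        (n : ℤ) - 2 * T - 2 * T + 4 * r k := by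
      have : ∀ j : ZMod n, (1 - 2 * χ j) * (1 - 2 * χ (j + k)) =
          1 - 2 * χ j - 2 * χ (j + k) + 4 * (χ j * χ (j + k)) := by
        intro j; ring
      rw [Finset.sum_congr rfl (fun j _ => this j)]
      rw [Finset.sum_add_distrib, Finset.sum_sub_distrib, Finset.sum_sub_distrib,
        Finset.sum_const, ← Finset.mul_sum, ← Finset.mul_sum, ← Finset.mul_sum]
      rw [hshift k]
      simp [ZMod.card, hT, hr]
    rw [expand] at h1
    linarith
  have hone : (1 : ZMod n) ≠ 0 := one_ne_zero
  -- n is even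
  have hneven : Even n := by
    have h1 := key 1 hone
    have : (n : ℤ) = 4 * T - 4 * r 1 := by linarith
    have : Even (n : ℤ) := ⟨2 * T - 2 * r 1, by linarith⟩
    exact_mod_cast this
  have h2n : (2 : ℕ) ∣ n := hneven.two_dvd
  -- r is constant on nonzero k
  have hrconst : ∀ k : ZMod n, k ≠ 0 → r k = r 1 := by
    intro k hk
    have h1 := key k hk
    have h2 := key 1 hone
    linarith
  -- the element of order 2
  set h0 : ZMod n := ((n / 2 : ℕ) : ZMod n) with hh0def
  have hh0ne : h0 ≠ 0 := by
    rw [hh0def, Ne, ZMod.natCast_eq_zero_iff]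
    intro hdvd
    have := Nat.le_of_dvd (by omega) hdvd
    omega
  have hh0add : h0 + h0 = 0 := by
    rw [hh0def, ← Nat.cast_add]
    have : n / 2 + n / 2 = n := by omega
    rw [this, ZMod.natCast_self]
  have hker : ∀ x : ZMod n, x + x = 0 → x = 0 ∨ x = h0 := by
    intro x hx
    have hval : ((x.val + x.val : ℕ) : ZMod n) = 0 := by
      push_cast
      rw [ZMod.natCast_val, ZMod.cast_id]
      exact hx
    rw [ZMod.natCast_eq_zero_iff] at hval
    have hlt : x.val < n := ZMod.val_lt x
    obtain ⟨m, hm⟩ := h2n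
    have : x.val = 0 ∨ x.val = n / 2 := by
      rcases hval with ⟨c, hc⟩
      have hc2 : c < 2 := by
        have h1 : n * c < n * 2 := by omega
        exact Nat.lt_of_mul_lt_mul_left h1
      interval_cases c <;> omega
    have hxx : ((x.val : ℕ) : ZMod n) = x := ZMod.natCast_rightInverse x
    rcases this with h | h
    · left
      rw [← hxx, h, Nat.cast_zero]
    · right
      rw [← hxx, h, hh0def]
  -- the ZMod 2 indicator
  set c : ZMod n → ZMod 2 := fun j => ((χ j : ℤ) : ZMod 2) with hcdef
  have hceven : ∀ j, c (-j) = c j := by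
    intro j; simp only [hcdef, hχeven j]
  have hcsq : ∀ j, c j * c j = c j := by
    intro j
    rcases hχ01 j with h | h <;> simp [hcdef, h]
  -- r(k) mod 2 as a ZMod 2 sum
  have hrcast : ∀ k : ZMod n, ((r k : ℤ) : ZMod 2) = ∑ j : ZMod n, c j * c (j + k) := by
    intro k
    rw [hr]
    push_cast
    rfl
  -- r(1) is even: the involution j ↦ -j-1 has no fixed points
  have hr1even : ((r 1 : ℤ) : ZMod 2) = 0 := by
    rw [hrcast 1]
    have hσ : ∀ j : ZMod n, -(-j - 1) - 1 = j := by intro j; ring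
    have hf : ∀ j : ZMod n, c (-j - 1) * c (-j - 1 + 1) = c j * c (j + 1) := by
      intro j
      have e1 : (-j - 1 : ZMod n) = -(j + 1) := by ring
      have e2 : (-j - 1 + 1 : ZMod n) = -j := by ring
      rw [e2, e1, hceven, hceven, mul_comm]
    rw [sum_eq_sum_fixed_zmod2 (fun j => -j - 1) hσ (fun j => c j * c (j + 1)) hf]
    have hempty : Finset.univ.filter (fun j : ZMod n => -j - 1 = j) = ∅ := by
      apply Finset.filter_false_of_mem
      intro j _
      intro hfix
      have hjj : j + j = -1 := by linear_combination -hfix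
      have h2' := congrArg (ZMod.castHom h2n (ZMod 2)) hjj
      rw [map_add, map_neg, _root_.map_one, CharTwo.add_self_eq_zero] at h2'
      exact (by decide : ¬(0 : ZMod 2) = -1) h2'
    rw [hempty, Finset.sum_empty]
  -- key periodicity: ξ(d) = ξ(d + h0) for d ∉ {0, h0}
  have hperiod : ∀ d : ZMod n, d ≠ 0 → d ≠ h0 → ξ d = ξ (d + h0) := by
    intro d hd0 hdh
    set k : ZMod n := d + d with hk
    have hkne : k ≠ 0 := by
      intro h
      rcases hker d h with h' | h' <;> [exact hd0 h'; exact hdh h']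
    have hsum0 : ∑ j : ZMod n, c j * c (j + k) = 0 := by
      rw [← hrcast k]
      rw [hrconst k hkne]
      exact hr1even
    -- involution j ↦ -j - k
    have hσ : ∀ j : ZMod n, -(-j - k) - k = j := by intro j; ring
    have hf : ∀ j : ZMod n, c (-j - k) * c (-j - k + k) = c j * c (j + k) := by
      intro j
      have e1 : (-j - k : ZMod n) = -(j + k) := by ring
      have e2 : (-j - k + k : ZMod n) = -j := by ring
      rw [e2, e1, hceven, hceven, mul_comm]
    rw [sum_eq_sum_fixed_zmod2 (fun j => -j - k) hσ (fun j => c j * c (j + k)) hf] at hsum0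
    -- fixed points are exactly {-d, h0 - d}
    have hfix : Finset.univ.filter (fun j : ZMod n => -j - k = j) = {-d, h0 - d} := by
      ext j
      simp only [Finset.mem_filter, Finset.mem_univ, true_and, Finset.mem_insert,
        Finset.mem_singleton]
      constructor
      · intro hj
        have hjk : (j + d) + (j + d) = 0 := by linear_combination -hj - hk
        rcases hker _ hjk with h | h
        · left; linear_combination h
        · right; linear_combination h
      · rintro (h | h)
        · rw [h]; linear_combination -hk
        · rw [h]; linear_combination -hh0add - hk
    rw [hfix] at hsum0
    have hne2 : (-d : ZMod n) ≠ h0 - d := by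
      intro h
      exact hh0ne (by linear_combination -h)
    rw [Finset.sum_pair hne2] at hsum0
    have e1 : (-d + k : ZMod n) = d := by linear_combination hk
    have e2 : (h0 - d : ZMod n) = -(d + h0) := by linear_combination hh0add
    have e3 : (h0 - d + k : ZMod n) = d + h0 := by linear_combination hk
    rw [e1, e3, e2, hceven (d + h0), hceven d, hcsq d, hcsq (d + h0)] at hsum0
    -- c d + c (d + h0) = 0 in ZMod 2 hence χ d = χ (d + h0)
    have hχeq : χ d = χ (d + h0) := by
      have hsum0' : ((χ d : ℤ) : ZMod 2) + ((χ (d + h0) : ℤ) : ZMod 2) = 0 := by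
        simp only [hcdef] at hsum0; exact hsum0
      rcases hχ01 d with h | h <;> rcases hχ01 (d + h0) with h' | h' <;>
          rw [h, h'] at hsum0' ⊢ <;>
        first
          | rfl
          | (exfalso; push_cast at hsum0'; revert hsum0'; decide)
    by_cases hd : ξ d = 1 <;> by_cases hd' : ξ (d + h0) = 1
    · rw [hd, hd']
    · exfalso; simp only [hχdef, if_pos hd, if_neg hd'] at hχeq; exact zero_ne_one hχeq
    · exfalso; simp only [hχdef, if_neg hd, if_pos hd'] at hχeq; exact one_ne_zero hχeq
    · rcases hpm' d with h | h
      · exact absurd h hd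
      · rcases hpm' (d + h0) with h' | h'
        · exact absurd h' hd'
        · rw [h, h']
  -- final contradiction using the correlation at h0
  have hfinal := horth h0 hh0ne
  have hsplit : ∑ j : ZMod n, ξ j * ξ (j + h0) =
      (∑ j ∈ ({0, h0} : Finset (ZMod n)), ξ j * ξ (j + h0)) +
      ∑ j ∈ Finset.univ \ ({0, h0} : Finset (ZMod n)), ξ j * ξ (j + h0) := by
    rw [← Finset.sum_sdiff (Finset.subset_univ ({0, h0} : Finset (ZMod n)))]
    ring
  have hcard2 : ({0, h0} : Finset (ZMod n)).card = 2 := by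
    rw [Finset.card_insert_of_notMem (by simpa using hh0ne.symm), Finset.card_singleton]
  have hrest : ∑ j ∈ Finset.univ \ ({0, h0} : Finset (ZMod n)), ξ j * ξ (j + h0) =
      ((n - 2 : ℕ) : ℝ) := by
    have hone' : ∀ j ∈ Finset.univ \ ({0, h0} : Finset (ZMod n)), ξ j * ξ (j + h0) = 1 := by
      intro j hj
      simp only [Finset.mem_sdiff, Finset.mem_univ, true_and, Finset.mem_insert,
        Finset.mem_singleton, not_or] at hj
      rw [← hperiod j hj.1 hj.2]
      rcases hpm' j with h | h <;> rw [h] <;> norm_num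
    rw [Finset.sum_congr rfl hone', Finset.sum_const,
      Finset.card_sdiff_of_subset (Finset.subset_univ _), hcard2, Finset.card_univ, ZMod.card]
    simp
  have hpairbound : ∑ j ∈ ({0, h0} : Finset (ZMod n)), ξ j * ξ (j + h0) ≥ -2 := by
    rw [Finset.sum_pair (hh0ne.symm : (0 : ZMod n) ≠ h0)]
    have b1 : ξ 0 * ξ (0 + h0) ≥ -1 := by
      rcases hpm' 0 with h | h <;> rcases hpm' (0 + h0) with h' | h' <;>
        rw [h, h'] <;> norm_num
    have b2 : ξ h0 * ξ (h0 + h0) ≥ -1 := by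
      rcases hpm' h0 with h | h <;> rcases hpm' (h0 + h0) with h' | h' <;>
        rw [h, h'] <;> norm_num
    linarith
  have hcast : ((n - 2 : ℕ) : ℝ) = (n : ℝ) - 2 := by
    have : (2 : ℕ) ≤ n := by omega
    push_cast [Nat.cast_sub this]
    ring
  have hnR : (4 : ℝ) < (n : ℝ) := by exact_mod_cast hn
  rw [hsplit, hrest, hcast] at hfinal
  linarith
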